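/- arXiv:2204.05382 — 3 statements merged into one kernel-verified Lean document; each statement's English description precedes it below -/
import Mathlib

section
/- Let c_n, c_s > 0, d, h, φ, ū ≥ 0 and suppose c_n c_s > d h φ²(1 + 2/c_n) + d ū. Then the 2×2 matrix J = [[d(hφ² + ū)/c_s − c_n , d φ/c_n],[2hφ , −c_s]] is Hurwitz. -/
/-- A real square matrix is Hurwitz if every eigenvalue (element of the complex spectrum)
has strictly negative real part. -/
def IsHurwitz {k : ℕ} (A : Matrix (Fin k) (Fin k) ℝ) : Prop :=
  ∀ z ∈ spectrum ℂ (A.map Complex.ofReal), z.re < 0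

lemma quad_root_re_neg (T D : ℝ) (hT : T < 0) (hD : 0 < D) (z : ℂ)
    (hz : z^2 - T*z + D = 0) : z.re < 0 := by
  by_contra hx
  push_neg at hx
  have hre := congrArg Complex.re hz
  have him := congrArg Complex.im hz
  simp [pow_two, Complex.mul_re, Complex.mul_im] at hre him
  set x := z.re
  set y := z.im
  have h2 : (2*x - T) * y^2 = 0 := by linear_combination y * him
  have hpos : 0 < 2*x - T := by linarith
  have hy : y^2 = 0 := by
    rcases mul_eq_zero.1 h2 with h | h
    · linarith
    · exact h
  nlinarith [hy, hre]

lemma spec_fin_two (a b c d : ℝ) (z : ℂ)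
    (hz : z ∈ spectrum ℂ ((!![a, b; c, d]).map Complex.ofReal)) :
    z^2 - (a+d)*z + (a*d - b*c) = 0 := by
  rw [spectrum.mem_iff, Matrix.isUnit_iff_isUnit_det] at hz
  rw [isUnit_iff_ne_zero, not_not] at hz
  simp [Matrix.algebraMap_matrix_apply, Matrix.map_apply, Matrix.det_fin_two,
    Matrix.smul_apply, Matrix.one_apply] at hz
  push_cast
  ring_nf
  ring_nf at hz
  linear_combination hz

/-- The aggregate Metzler majorant bound for the Jacobian of the firing-rate-Hebbian model:
if c_n c_s > d h φ²(1 + 2/c_n) + d ū then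
J = [[d(hφ²+ū)/c_s − c_n, dφ/c_n],[2hφ, −c_s]] is Hurwitz. -/
theorem firing_rate_hebbian_hurwitz
    (cn cs d h φ ub : ℝ) (hcn : 0 < cn) (hcs : 0 < cs)
    (hd : 0 ≤ d) (hh : 0 ≤ h) (hφ : 0 ≤ φ) (hub : 0 ≤ ub)
    (hcond : cn * cs > d * h * φ ^ 2 * (1 + 2 / cn) + d * ub) :
    IsHurwitz !![d * (h * φ ^ 2 + ub) / cs - cn, d * φ / cn; 2 * h * φ, -cs] := by
  intro z hz
  have hq := spec_fin_two _ _ _ _ z hz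
  have hcn' : (cn:ℝ) ≠ 0 := ne_of_gt hcn
  have hcs' : (cs:ℝ) ≠ 0 := ne_of_gt hcs
  have hnn : 0 ≤ d * h * φ ^ 2 * (2 / cn) := by positivity
  have hnn2 : 0 ≤ d * ub := mul_nonneg hd hub
  have key : d * (h * φ ^ 2 + ub) < cn * cs := by nlinarith
  have hT : (d * (h * φ ^ 2 + ub) / cs - cn) + -cs < 0 := by
    have : d * (h * φ ^ 2 + ub) / cs < cn := by
      rw [div_lt_iff₀ hcs]; nlinarith
    linarith
  have hD : 0 < (d * (h * φ ^ 2 + ub) / cs - cn) * (-cs) - (d * φ / cn) * (2 * h * φ) := by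
    have h1 : (d * (h * φ ^ 2 + ub) / cs - cn) * (-cs) = cn * cs - d * (h * φ ^ 2 + ub) := by
      field_simp; ring
    have h2 : (d * φ / cn) * (2 * h * φ) = d * h * φ ^ 2 * (2 / cn) := by
      field_simp
    rw [h1, h2]
    nlinarith
  refine quad_root_re_neg _ _ hT hD z ?_
  push_cast
  push_cast at hq
  linear_combination hq
end

section
/- Let A ∈ ℝ^{n×n} be block partitioned with blocks A_{ij} ∈ ℝ^{n_i × n_j} (Σ n_i = n), equip each ℝ^{n_i} with a norm ‖·‖_i, and let ⌈A⌉_agg ∈ ℝ^{r×r} be the aggregate Metzler majorant with (⌈A⌉_agg)_{ii} = μ_i(A_{ii}) and (⌈A⌉_agg)_{ij} = ‖A_{ij}‖_{ij} for i ≠ j, where ‖A_{ij}‖_{ij} is the induced operator norm from ‖·‖_j to ‖·‖_i and μ_i the logarithmic norm induced by ‖·‖_i. If ⌈A⌉_agg is Hurwitz, then A is Hurwitz. -/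
open Finset

namespace AggAux

variable {m : ℕ} {N : (Fin m → ℝ) → ℝ}

section Basics
variable (hadd : ∀ x y, N (x + y) ≤ N x + N y)
  (hsmul : ∀ (c : ℝ) x, N (c • x) = |c| * N x)

include hsmul in
lemma N_zero : N 0 = 0 := by
  have := hsmul 0 0; simpa using this

include hadd hsmul in
lemma N_nonneg (x : Fin m → ℝ) : 0 ≤ N x := by
  have h2 : N (x + (-1 : ℝ) • x) ≤ N x + N ((-1 : ℝ) • x) := hadd _ _
  rw [hsmul (-1) x] at h2
  simp at h2
  have h0 : N 0 = 0 := N_zero hsmul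
  rw [h0] at h2
  linarith

include hadd hsmul in
lemma N_sum {ι : Type*} (s : Finset ι) (f : ι → Fin m → ℝ) :
    N (∑ j ∈ s, f j) ≤ ∑ j ∈ s, N (f j) := by
  classical
  induction s using Finset.induction_on with
  | empty => simp [N_zero hsmul]
  | insert _ _ hni ih =>
    rw [Finset.sum_insert hni, Finset.sum_insert hni]
    exact le_trans (hadd _ _) (by linarith)

include hadd hsmul in
lemma N_le_norm : ∃ C : ℝ, 0 ≤ C ∧ ∀ x, N x ≤ C * ‖x‖ := by
  classical
  set e : Fin m → Fin m → ℝ := fun k => Pi.single k 1 with he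
  refine ⟨∑ k : Fin m, N (e k), Finset.sum_nonneg fun k _ => N_nonneg hadd hsmul _, fun x => ?_⟩
  have hx : x = ∑ k : Fin m, (x k) • e k := by
    funext a
    simp [he, Finset.sum_apply, Pi.single_apply]
  calc N x ≤ ∑ k : Fin m, N ((x k) • e k) := by
        conv_lhs => rw [hx]
        exact N_sum hadd hsmul _ _
    _ = ∑ k : Fin m, |x k| * N (e k) := by
        refine Finset.sum_congr rfl fun k _ => ?_
        exact hsmul _ _
    _ ≤ ∑ k : Fin m, ‖x‖ * N (e k) := by
        refine Finset.sum_le_sum fun k _ => ?_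
        have h1 : |x k| ≤ ‖x‖ := by
          simpa using norm_le_pi_norm x k
        exact mul_le_mul_of_nonneg_right h1 (N_nonneg hadd hsmul _)
    _ = (∑ k : Fin m, N (e k)) * ‖x‖ := by
        rw [Finset.sum_mul]
        exact Finset.sum_congr rfl fun k _ => mul_comm _ _

include hadd hsmul in
lemma N_continuous : Continuous N := by
  obtain ⟨C, hC0, hC⟩ := N_le_norm hadd hsmul
  rw [Metric.continuous_iff]
  intro x ε hε
  by_cases hC0' : C = 0
  · refine ⟨1, one_pos, fun y _ => ?_⟩
    have h1 : N y ≤ 0 := by simpa [hC0'] using hC y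
    have h2 : N x ≤ 0 := by simpa [hC0'] using hC x
    have := N_nonneg hadd hsmul x; have := N_nonneg hadd hsmul y
    have : N y = N x := by linarith
    simpa [dist, this] using hε
  · have hCpos : 0 < C := lt_of_le_of_ne hC0 (Ne.symm hC0')
    refine ⟨ε / C, by positivity, fun y hy => ?_⟩
    have key : ∀ u w : Fin m → ℝ, N u - N w ≤ C * ‖u - w‖ := by
      intro u w
      have h1 : N u ≤ N w + N (u - w) := by
        have := hadd w (u - w); simpa [add_sub_cancel] using this
      have := hC (u - w); linarith
    have h1 := key y x
    have h2 := key x y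
    rw [show x - y = -(y - x) by ring, norm_neg] at h2
    have hdist : dist y x = ‖y - x‖ := rfl
    rw [Real.dist_eq]
    rw [abs_sub_lt_iff]
    have hlt : C * ‖y - x‖ < ε := by
      rw [hdist] at hy
      calc C * ‖y - x‖ < C * (ε / C) := by
            exact mul_lt_mul_of_pos_left hy hCpos
        _ = ε := by field_simp
    constructor <;> linarith

include hadd hsmul in
lemma norm_le_N (hzero : ∀ x, N x = 0 ↔ x = 0) : ∃ c : ℝ, 0 < c ∧ ∀ x, c * ‖x‖ ≤ N x := by
  by_cases hm : m = 0
  · refine ⟨1, one_pos, fun x => ?_⟩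
    subst hm
    have hx : x = 0 := funext fun a => absurd a.2 (by omega)
    have h1 : ‖x‖ = 0 := by rw [hx, norm_zero]
    have h2 : N x = 0 := by rw [hx, N_zero hsmul]
    rw [h1, h2]; norm_num
  · have hne : (Metric.sphere (0 : Fin m → ℝ) 1).Nonempty := by
      have : Nonempty (Fin m) := ⟨⟨0, Nat.pos_of_ne_zero hm⟩⟩
      exact NormedSpace.sphere_nonempty.mpr one_pos.le
    have hcpt : IsCompact (Metric.sphere (0 : Fin m → ℝ) 1) := isCompact_sphere 0 1
    obtain ⟨u, hu, hmin⟩ := hcpt.exists_isMinOn hne ((N_continuous hadd hsmul).continuousOn)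
    have hu1 : ‖u‖ = 1 := by simpa using hu
    have hu0 : u ≠ 0 := by intro h; rw [h] at hu1; simp at hu1
    have hcpos : 0 < N u := by
      rcases lt_or_eq_of_le (N_nonneg hadd hsmul u) with h | h
      · exact h
      · exact absurd ((hzero u).mp h.symm) hu0
    refine ⟨N u, hcpos, fun x => ?_⟩
    by_cases hx : x = 0
    · simp [hx, N_zero hsmul]
    · have hnx : 0 < ‖x‖ := norm_pos_iff.mpr hx
      have hmem : ‖x‖⁻¹ • x ∈ Metric.sphere (0 : Fin m → ℝ) 1 := by
        simp [norm_smul, abs_inv, abs_of_pos hnx, inv_mul_cancel₀ hnx.ne']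
      have hle : N u ≤ N (‖x‖⁻¹ • x) := hmin hmem
      have heq : N (‖x‖⁻¹ • x) = ‖x‖⁻¹ * N x := by
        rw [hsmul]; rw [abs_inv, abs_of_pos hnx]
      rw [heq] at hle
      have h3 : N u * ‖x‖ ≤ (‖x‖⁻¹ * N x) * ‖x‖ := mul_le_mul_of_nonneg_right hle hnx.le
      calc N u * ‖x‖ ≤ (‖x‖⁻¹ * N x) * ‖x‖ := h3
        _ = N x := by field_simp
    
end Basics
end AggAux

open Pointwise
namespace AggAux2
open AggAux

def opSet {m1 m2 : ℕ} (N1 : (Fin m1 → ℝ) → ℝ) (N2 : (Fin m2 → ℝ) → ℝ)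
    (B : Matrix (Fin m1) (Fin m2) ℝ) : Set ℝ :=
  {c | ∃ v, N2 v = 1 ∧ c = N1 (B.mulVec v)}

section Op
variable {m1 m2 : ℕ} {N1 : (Fin m1 → ℝ) → ℝ} {N2 : (Fin m2 → ℝ) → ℝ}
  {B : Matrix (Fin m1) (Fin m2) ℝ}

lemma mulVec_norm_bound (B : Matrix (Fin m1) (Fin m2) ℝ) :
    ∃ K : ℝ, 0 ≤ K ∧ ∀ v, ‖B.mulVec v‖ ≤ K * ‖v‖ := by
  refine ⟨‖(Matrix.mulVecLin B).toContinuousLinearMap‖, norm_nonneg _, fun v => ?_⟩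
  have := (Matrix.mulVecLin B).toContinuousLinearMap.le_opNorm v
  simpa using this

lemma opSet_bddAbove
    (hadd1 : ∀ x y, N1 (x + y) ≤ N1 x + N1 y) (hsmul1 : ∀ (c : ℝ) x, N1 (c • x) = |c| * N1 x)
    (hadd2 : ∀ x y, N2 (x + y) ≤ N2 x + N2 y) (hsmul2 : ∀ (c : ℝ) x, N2 (c • x) = |c| * N2 x)
    (hzero2 : ∀ x, N2 x = 0 ↔ x = 0) :
    BddAbove (opSet N1 N2 B) := by
  obtain ⟨C, hC0, hC⟩ := N_le_norm hadd1 hsmul1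
  obtain ⟨c2, hc2, hc2'⟩ := norm_le_N hadd2 hsmul2 hzero2
  obtain ⟨K, hK0, hK⟩ := mulVec_norm_bound B
  refine ⟨C * (K * c2⁻¹), ?_⟩
  rintro t ⟨v, hv1, rfl⟩
  have hv : ‖v‖ ≤ c2⁻¹ := by
    have := hc2' v
    rw [hv1] at this
    rw [← mul_le_mul_iff_right₀ hc2]
    calc c2 * ‖v‖ ≤ 1 := this
      _ = c2 * c2⁻¹ := by field_simp
  calc N1 (B.mulVec v) ≤ C * ‖B.mulVec v‖ := hC _
    _ ≤ C * (K * ‖v‖) := by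
        exact mul_le_mul_of_nonneg_left (hK v) hC0
    _ ≤ C * (K * c2⁻¹) := by
        exact mul_le_mul_of_nonneg_left (mul_le_mul_of_nonneg_left hv hK0) hC0
  
lemma op_nonneg (hadd1 : ∀ x y, N1 (x + y) ≤ N1 x + N1 y)
    (hsmul1 : ∀ (c : ℝ) x, N1 (c • x) = |c| * N1 x)
    (hbdd : BddAbove (opSet N1 N2 B)) : 0 ≤ sSup (opSet N1 N2 B) := by
  rcases Set.eq_empty_or_nonempty (opSet N1 N2 B) with h | h
  · rw [h, Real.sSup_empty]
  · obtain ⟨t, ht⟩ := h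
    obtain ⟨v, hv, rfl⟩ := ht
    exact le_trans (N_nonneg hadd1 hsmul1 _) (le_csSup hbdd ⟨v, hv, rfl⟩)

lemma op_bound (hadd1 : ∀ x y, N1 (x + y) ≤ N1 x + N1 y)
    (hsmul1 : ∀ (c : ℝ) x, N1 (c • x) = |c| * N1 x)
    (hsmul2 : ∀ (c : ℝ) x, N2 (c • x) = |c| * N2 x)
    (hzero2 : ∀ x, N2 x = 0 ↔ x = 0)
    (hnn2 : ∀ x, 0 ≤ N2 x)
    (hbdd : BddAbove (opSet N1 N2 B)) (u : Fin m2 → ℝ) :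
    N1 (B.mulVec u) ≤ sSup (opSet N1 N2 B) * N2 u := by
  by_cases hu : u = 0
  · subst hu
    have h1 : B.mulVec 0 = 0 := Matrix.mulVec_zero B
    rw [h1, N_zero hsmul1, N_zero hsmul2, mul_zero]
  · have ht : 0 < N2 u := lt_of_le_of_ne (hnn2 u) (fun h => hu ((hzero2 u).mp h.symm))
    have hmem : N1 (B.mulVec ((N2 u)⁻¹ • u)) ∈ opSet N1 N2 B := by
      refine ⟨(N2 u)⁻¹ • u, ?_, rfl⟩
      rw [hsmul2, abs_inv, abs_of_pos ht]
      field_simp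
    have hle := le_csSup hbdd hmem
    rw [Matrix.mulVec_smul, hsmul1, abs_inv, abs_of_pos ht] at hle
    calc N1 (B.mulVec u) = ((N2 u)⁻¹ * N1 (B.mulVec u)) * N2 u := by field_simp
      _ ≤ sSup (opSet N1 N2 B) * N2 u := mul_le_mul_of_nonneg_right hle ht.le

lemma op_smul (hsmul1 : ∀ (c : ℝ) x, N1 (c • x) = |c| * N1 x)
    {h : ℝ} (hh : 0 ≤ h) :
    sSup (opSet N1 N2 (h • B)) = h * sSup (opSet N1 N2 B) := by
  have hset : opSet N1 N2 (h • B) = h • (opSet N1 N2 B) := by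
    ext t
    constructor
    · rintro ⟨v, hv, rfl⟩
      refine ⟨N1 (B.mulVec v), ⟨v, hv, rfl⟩, ?_⟩
      show h • N1 (B.mulVec v) = N1 ((h • B).mulVec v)
      rw [smul_eq_mul, ← abs_of_nonneg hh, ← hsmul1, Matrix.smul_mulVec, abs_of_nonneg hh]
    · rintro ⟨t', ⟨v, hv, rfl⟩, rfl⟩
      refine ⟨v, hv, ?_⟩
      show h • N1 (B.mulVec v) = N1 ((h • B).mulVec v)
      rw [smul_eq_mul, ← abs_of_nonneg hh, ← hsmul1, Matrix.smul_mulVec, abs_of_nonneg hh]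
  rw [hset, Real.sSup_smul_of_nonneg hh, smul_eq_mul]

end Op
end AggAux2

namespace AggAux3
open AggAux AggAux2 Pointwise

def cset {m : ℕ} (N : (Fin m → ℝ) → ℝ) (x y : Fin m → ℝ) : Set ℝ :=
  {t | ∃ c s : ℝ, c ^ 2 + s ^ 2 = 1 ∧ t = N (c • x + s • y)}

noncomputable def Cnorm {m : ℕ} (N : (Fin m → ℝ) → ℝ) (x y : Fin m → ℝ) : ℝ :=
  sSup (cset N x y)

section CN
variable {m : ℕ} {N : (Fin m → ℝ) → ℝ}
  (hadd : ∀ x y, N (x + y) ≤ N x + N y)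
  (hsmul : ∀ (c : ℝ) x, N (c • x) = |c| * N x)

lemma cset_nonempty (x y : Fin m → ℝ) : (cset N x y).Nonempty :=
  ⟨N ((1:ℝ) • x + (0:ℝ) • y), 1, 0, by norm_num, rfl⟩

lemma abs_le_one_of_unit {c s : ℝ} (h : c ^ 2 + s ^ 2 = 1) : |c| ≤ 1 := by
  nlinarith [sq_abs c, abs_nonneg c, sq_nonneg s]

include hadd hsmul in
lemma cset_elem_le {x y : Fin m → ℝ} {t : ℝ} (ht : t ∈ cset N x y) : t ≤ N x + N y := by
  obtain ⟨c, s, hcs, rfl⟩ := ht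
  calc N (c • x + s • y) ≤ N (c • x) + N (s • y) := hadd _ _
    _ = |c| * N x + |s| * N y := by rw [hsmul, hsmul]
    _ ≤ 1 * N x + 1 * N y := by
        have h1 := abs_le_one_of_unit hcs
        have h2 : |s| ≤ 1 := abs_le_one_of_unit (by linarith [hcs] : s ^ 2 + c ^ 2 = 1)
        have := N_nonneg hadd hsmul x
        have := N_nonneg hadd hsmul y
        gcongr
    _ = N x + N y := by ring

include hadd hsmul in
lemma cset_bddAbove (x y : Fin m → ℝ) : BddAbove (cset N x y) :=
  ⟨N x + N y, fun _ ht => cset_elem_le hadd hsmul ht⟩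

include hadd hsmul in
lemma N_le_Cnorm (x y : Fin m → ℝ) : N x ≤ Cnorm N x y := by
  have : N ((1:ℝ) • x + (0:ℝ) • y) = N x := by norm_num
  rw [← this]
  exact le_csSup (cset_bddAbove hadd hsmul x y) ⟨1, 0, by norm_num, rfl⟩

include hadd hsmul in
lemma N_le_Cnorm' (x y : Fin m → ℝ) : N y ≤ Cnorm N x y := by
  have : N ((0:ℝ) • x + (1:ℝ) • y) = N y := by norm_num
  rw [← this]
  exact le_csSup (cset_bddAbove hadd hsmul x y) ⟨0, 1, by norm_num, rfl⟩

include hadd hsmul in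
lemma Cnorm_nonneg (x y : Fin m → ℝ) : 0 ≤ Cnorm N x y :=
  le_trans (N_nonneg hadd hsmul x) (N_le_Cnorm hadd hsmul x y)

include hadd hsmul in
lemma Cnorm_add (x x' y y' : Fin m → ℝ) :
    Cnorm N (x + x') (y + y') ≤ Cnorm N x y + Cnorm N x' y' := by
  refine csSup_le (cset_nonempty _ _) ?_
  rintro t ⟨c, s, hcs, rfl⟩
  have hrw : c • (x + x') + s • (y + y') = (c • x + s • y) + (c • x' + s • y') := by
    module
  rw [hrw]
  refine le_trans (hadd _ _) ?_
  have h1 : N (c • x + s • y) ≤ Cnorm N x y :=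
    le_csSup (cset_bddAbove hadd hsmul x y) ⟨c, s, hcs, rfl⟩
  have h2 : N (c • x' + s • y') ≤ Cnorm N x' y' :=
    le_csSup (cset_bddAbove hadd hsmul x' y') ⟨c, s, hcs, rfl⟩
  linarith

include hadd hsmul in
lemma Cnorm_zero_zero : Cnorm N (0 : Fin m → ℝ) 0 = 0 := by
  have h1 : cset N (0 : Fin m → ℝ) 0 = {0} := by
    ext t
    constructor
    · rintro ⟨c, s, _, rfl⟩
      simp [N_zero hsmul]
    · rintro rfl
      exact ⟨1, 0, by norm_num, by simp [N_zero hsmul]⟩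
  rw [Cnorm, h1, csSup_singleton]

include hadd hsmul in
lemma Cnorm_sum {ι : Type*} (s : Finset ι) (f g : ι → Fin m → ℝ) :
    Cnorm N (∑ j ∈ s, f j) (∑ j ∈ s, g j) ≤ ∑ j ∈ s, Cnorm N (f j) (g j) := by
  classical
  induction s using Finset.induction_on with
  | empty => simp [Cnorm_zero_zero hadd hsmul]
  | insert _ _ hni ih =>
    rw [Finset.sum_insert hni, Finset.sum_insert hni, Finset.sum_insert hni]
    exact le_trans (Cnorm_add hadd hsmul _ _ _ _) (by linarith)

end CN

section CNOp
variable {m1 m2 : ℕ} {N1 : (Fin m1 → ℝ) → ℝ} {N2 : (Fin m2 → ℝ) → ℝ}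
  (hadd1 : ∀ x y, N1 (x + y) ≤ N1 x + N1 y)
  (hsmul1 : ∀ (c : ℝ) x, N1 (c • x) = |c| * N1 x)
  (hadd2 : ∀ x y, N2 (x + y) ≤ N2 x + N2 y)
  (hsmul2 : ∀ (c : ℝ) x, N2 (c • x) = |c| * N2 x)
  (hzero2 : ∀ x, N2 x = 0 ↔ x = 0)

include hadd1 hsmul1 hadd2 hsmul2 hzero2 in
lemma Cnorm_mulVec (B : Matrix (Fin m1) (Fin m2) ℝ) (x y : Fin m2 → ℝ) :
    Cnorm N1 (B.mulVec x) (B.mulVec y) ≤ sSup (opSet N1 N2 B) * Cnorm N2 x y := by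
  have hbdd := opSet_bddAbove (B := B) hadd1 hsmul1 hadd2 hsmul2 hzero2
  have hop0 := op_nonneg (N2 := N2) (B := B) hadd1 hsmul1 hbdd
  refine csSup_le (cset_nonempty _ _) ?_
  rintro t ⟨c, s, hcs, rfl⟩
  have hrw : c • B.mulVec x + s • B.mulVec y = B.mulVec (c • x + s • y) := by
    rw [Matrix.mulVec_add, Matrix.mulVec_smul, Matrix.mulVec_smul]
  rw [hrw]
  calc N1 (B.mulVec (c • x + s • y)) ≤ sSup (opSet N1 N2 B) * N2 (c • x + s • y) :=
        op_bound hadd1 hsmul1 hsmul2 hzero2 (N_nonneg hadd2 hsmul2) hbdd _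
    _ ≤ sSup (opSet N1 N2 B) * Cnorm N2 x y := by
        refine mul_le_mul_of_nonneg_left ?_ hop0
        exact le_csSup (cset_bddAbove hadd2 hsmul2 x y) ⟨c, s, hcs, rfl⟩

end CNOp

section Rot
variable {m : ℕ} {N : (Fin m → ℝ) → ℝ}
  (hadd : ∀ x y, N (x + y) ≤ N x + N y)
  (hsmul : ∀ (c : ℝ) x, N (c • x) = |c| * N x)

include hadd hsmul in
lemma Cnorm_rot (a b : ℝ) (x y : Fin m → ℝ) :
    Cnorm N (a • x - b • y) (b • x + a • y) = Real.sqrt (a ^ 2 + b ^ 2) * Cnorm N x y := by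
  by_cases hab : a = 0 ∧ b = 0
  · obtain ⟨rfl, rfl⟩ := hab
    have h1 : (0:ℝ) • x - (0:ℝ) • y = 0 := by module
    have h2 : (0:ℝ) • x + (0:ℝ) • y = 0 := by module
    rw [h1, h2, Cnorm_zero_zero hadd hsmul]
    norm_num
  · have hρ2pos : 0 < a ^ 2 + b ^ 2 := by
      rcases not_and_or.mp hab with h | h
      · positivity
      · positivity
    set ρ := Real.sqrt (a ^ 2 + b ^ 2) with hρ
    have hρpos : 0 < ρ := Real.sqrt_pos.mpr hρ2pos
    have hρsq : ρ ^ 2 = a ^ 2 + b ^ 2 := Real.sq_sqrt hρ2pos.le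
    have hset : cset N (a • x - b • y) (b • x + a • y) = ρ • cset N x y := by
      ext t
      constructor
      · rintro ⟨c, s, hcs, rfl⟩
        refine ⟨N (((c * a + s * b) / ρ) • x + ((s * a - c * b) / ρ) • y),
          ⟨(c * a + s * b) / ρ, (s * a - c * b) / ρ, ?_, rfl⟩, ?_⟩
        · field_simp
          nlinarith [hcs, hρsq]
        · have hv : c • (a • x - b • y) + s • (b • x + a • y)
              = ρ • (((c * a + s * b) / ρ) • x + ((s * a - c * b) / ρ) • y) := by
            conv_rhs => rw [smul_add, smul_smul, smul_smul]
            rw [mul_div_cancel₀ _ hρpos.ne', mul_div_cancel₀ _ hρpos.ne']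
            module
          show ρ • N _ = N _
          rw [hv, hsmul, abs_of_pos hρpos, smul_eq_mul]
      · rintro ⟨t', ⟨c', s', hcs', rfl⟩, rfl⟩
        refine ⟨(a * c' - b * s') / ρ, (b * c' + a * s') / ρ, ?_, ?_⟩
        · field_simp
          nlinarith [hcs', hρsq]
        · have ha : ((a * c' - b * s') / ρ) * a + ((b * c' + a * s') / ρ) * b = ρ * c' := by
            field_simp
            linear_combination (-c') * hρsq
          have hb : ((b * c' + a * s') / ρ) * a - ((a * c' - b * s') / ρ) * b = ρ * s' := by
            field_simp
            linear_combination (-s') * hρsq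
          have hv : ((a * c' - b * s') / ρ) • (a • x - b • y) + ((b * c' + a * s') / ρ) • (b • x + a • y)
              = ρ • (c' • x + s' • y) := by
            have h1 : ρ • (c' • x + s' • y) = (ρ * c') • x + (ρ * s') • y := by
              conv_lhs => rw [smul_add, smul_smul, smul_smul]
            rw [h1, ← ha, ← hb]
            module
          show ρ • N _ = N _
          rw [hv, hsmul, abs_of_pos hρpos, smul_eq_mul]
    rw [Cnorm, hset, Real.sSup_smul_of_nonneg hρpos.le, smul_eq_mul]
    rfl

end Rot
end AggAux3

namespace AggAux4
open Finset Filter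

attribute [local instance] Matrix.linftyOpNormedRing Matrix.linftyOpNormedAlgebra

set_option maxHeartbeats 2000000 in
lemma metzler_contradiction {r : ℕ} (M : Matrix (Fin r) (Fin r) ℝ)
    (hoff : ∀ i j, i ≠ j → 0 ≤ M i j)
    (hHurwitz : ∀ z ∈ spectrum ℂ (M.map Complex.ofReal), z.re < 0)
    (ξ : Fin r → ℝ) (hξ0 : ∀ i, 0 ≤ ξ i) (i0 : Fin r) (hpos : 0 < ξ i0)
    (α : ℝ) (hα : 0 ≤ α) (hineq : ∀ i, α * ξ i ≤ ∑ j, M i j * ξ j) : False := by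
  classical
  haveI : CompleteSpace (Matrix (Fin r) (Fin r) ℂ) := FiniteDimensional.complete ℂ _
  set Mc := M.map Complex.ofReal with hMc
  set s0 : ℝ := ∑ i, |M i i| with hs0def
  have hs0 : 0 ≤ s0 := Finset.sum_nonneg fun i _ => abs_nonneg _
  have hs0' : ∀ i, -M i i ≤ s0 := by
    intro i
    have h1 : |M i i| ≤ s0 := Finset.single_le_sum (fun j _ => abs_nonneg (M j j)) (mem_univ i)
    have := neg_abs_le (M i i)
    linarith
  set K : ℝ := ‖Mc‖ * ‖(1 : Matrix (Fin r) (Fin r) ℂ)‖ with hKdef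
  have hK0 : 0 ≤ K := mul_nonneg (norm_nonneg _) (norm_nonneg _)
  have hKbound : ∀ μ ∈ spectrum ℂ Mc, ‖μ‖ ≤ K := fun μ hμ =>
    spectrum.norm_le_norm_mul_of_mem hμ
  obtain ⟨δ, hδpos, hδ⟩ : ∃ δ : ℝ, 0 < δ ∧ ∀ μ ∈ spectrum ℂ Mc, μ.re ≤ -δ := by
    rcases Set.eq_empty_or_nonempty (spectrum ℂ Mc) with h | h
    · exact ⟨1, one_pos, fun μ hμ => absurd hμ (by rw [h]; exact Set.notMem_empty μ)⟩
    · obtain ⟨μ0, hμ0, hmax⟩ := (spectrum.isCompact Mc).exists_isMaxOn h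
        (Complex.continuous_re.continuousOn)
      refine ⟨-μ0.re, by simpa using hHurwitz μ0 hμ0, fun μ hμ => by simpa using hmax hμ⟩
  obtain ⟨q, hq0, hqq⟩ : ∃ q : ℝ, 0 ≤ q ∧ 2 * δ * q = K ^ 2 :=
    ⟨K ^ 2 / (2 * δ), by positivity, by field_simp⟩
  obtain ⟨c, hcdef⟩ : ∃ c : ℝ, c = s0 + δ + K + q := ⟨_, rfl⟩
  have hcpos : 0 < c := by rw [hcdef]; positivity
  have hcs0 : s0 ≤ c := by rw [hcdef]; linarith
  have hcKδ : K + δ ≤ c := by rw [hcdef]; linarith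
  set rr : ℝ := Real.sqrt ((c - δ) ^ 2 + K ^ 2) with hrrdef
  have hrrc : rr < c := by
    have h2 : 0 < 2 * c * δ - δ ^ 2 - K ^ 2 := by
      have hc' : 2 * c * δ = 2 * s0 * δ + 2 * δ ^ 2 + 2 * K * δ + 2 * δ * q := by
        rw [hcdef]; ring
      nlinarith [mul_nonneg hs0 hδpos.le, mul_nonneg hK0 hδpos.le]
    have h1 : (c - δ) ^ 2 + K ^ 2 < c ^ 2 := by nlinarith
    calc rr < Real.sqrt (c ^ 2) := Real.sqrt_lt_sqrt (by positivity) h1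
      _ = c := Real.sqrt_sq hcpos.le
  have hrr0 : 0 ≤ rr := Real.sqrt_nonneg _
  -- nonnegative matrix B = M + c•1
  set B : Matrix (Fin r) (Fin r) ℝ := M + c • (1 : Matrix (Fin r) (Fin r) ℝ) with hBdef
  have hBentry : ∀ i j, B i j = M i j + (if i = j then c else 0) := by
    intro i j
    simp [hBdef, Matrix.one_apply, Matrix.add_apply]
  have hBnn : ∀ i j, 0 ≤ B i j := by
    intro i j
    rw [hBentry]
    by_cases hij : i = j
    · subst hij; simp only [if_pos]; have := hs0' i; linarith
    · simp only [if_neg hij]; have := hoff i j hij; linarith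
  have hBpow_nn : ∀ k : ℕ, ∀ i j, 0 ≤ (B ^ k) i j := by
    intro k
    induction k with
    | zero => intro i j; simp [Matrix.one_apply]; split <;> norm_num
    | succ k ih =>
      intro i j
      rw [pow_succ, Matrix.mul_apply]
      exact Finset.sum_nonneg fun l _ => mul_nonneg (ih i l) (hBnn l j)
  -- subinvariance iteration
  have hBξ : ∀ i, (α + c) * ξ i ≤ ∑ j, B i j * ξ j := by
    intro i
    have h1 : ∑ j, B i j * ξ j = (∑ j, M i j * ξ j) + c * ξ i := by
      simp only [hBentry, add_mul, ite_mul, zero_mul, Finset.sum_add_distrib,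
        Finset.sum_ite_eq, mem_univ, if_true]
    rw [h1]
    have := hineq i
    nlinarith [mul_nonneg hcpos.le (hξ0 i)]
  have hkey : ∀ (k : ℕ) i, (α + c) ^ k * ξ i ≤ ∑ j, (B ^ k) i j * ξ j := by
    intro k
    induction k with
    | zero =>
      intro i
      simp [Matrix.one_apply, Finset.sum_ite_eq, mem_univ]
    | succ k ih =>
      intro i
      have hac : 0 ≤ α + c := by linarith
      calc (α + c) ^ (k + 1) * ξ i = (α + c) ^ k * ((α + c) * ξ i) := by ring
        _ ≤ (α + c) ^ k * (∑ j, B i j * ξ j) := by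
            exact mul_le_mul_of_nonneg_left (hBξ i) (pow_nonneg hac k)
        _ = ∑ j, B i j * ((α + c) ^ k * ξ j) := by
            rw [Finset.mul_sum]
            exact Finset.sum_congr rfl fun j _ => by ring
        _ ≤ ∑ j, B i j * (∑ l, (B ^ k) j l * ξ l) := by
            refine Finset.sum_le_sum fun j _ => ?_
            exact mul_le_mul_of_nonneg_left (ih j) (hBnn i j)
        _ = ∑ j, ∑ l, B i j * ((B ^ k) j l * ξ l) := by
            exact Finset.sum_congr rfl fun j _ => Finset.mul_sum _ _ _
        _ = ∑ l, ∑ j, B i j * ((B ^ k) j l * ξ l) := Finset.sum_comm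
        _ = ∑ l, (∑ j, B i j * (B ^ k) j l) * ξ l := by
            refine Finset.sum_congr rfl fun l _ => ?_
            rw [Finset.sum_mul]
            exact Finset.sum_congr rfl fun j _ => by ring
        _ = ∑ l, (B ^ (k + 1)) i l * ξ l := by
            refine Finset.sum_congr rfl fun l _ => ?_
            rw [pow_succ', Matrix.mul_apply]
  -- bound via matrix norms
  set Ξ : ℝ := ∑ j, ξ j with hΞdef
  have hΞ : ∀ j, ξ j ≤ Ξ := fun j => Finset.single_le_sum (fun l _ => hξ0 l) (mem_univ j)
  have hΞpos : 0 < Ξ := lt_of_lt_of_le hpos (hΞ i0)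
  set Bc : Matrix (Fin r) (Fin r) ℂ := B.map Complex.ofReal with hBcdef
  have hBcpow : ∀ k : ℕ, Bc ^ k = (B ^ k).map Complex.ofReal := by
    intro k
    induction k with
    | zero =>
      ext i j
      simp [Matrix.one_apply]
      split <;> simp
    | succ k ih =>
      rw [pow_succ, pow_succ, ih]
      ext i j
      simp only [Matrix.mul_apply, Matrix.map_apply, hBcdef]
      push_cast
      ring
  have hnormbound : ∀ k : ℕ, (α + c) ^ k * ξ i0 ≤ Ξ * ‖Bc ^ k‖ := by
    intro k
    have h1 : (α + c) ^ k * ξ i0 ≤ ∑ j, (B ^ k) i0 j * ξ j := hkey k i0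
    have h2 : ∑ j, (B ^ k) i0 j * ξ j ≤ ∑ j, (B ^ k) i0 j * Ξ := by
      refine Finset.sum_le_sum fun j _ => ?_
      exact mul_le_mul_of_nonneg_left (hΞ j) (hBpow_nn k i0 j)
    have h3 : ∑ j, (B ^ k) i0 j * Ξ = Ξ * ∑ j, (B ^ k) i0 j := by
      rw [Finset.mul_sum]
      exact Finset.sum_congr rfl fun j _ => by ring
    have h4 : ∑ j, (B ^ k) i0 j ≤ ‖Bc ^ k‖ := by
      have hrow : (∑ j, ‖(Bc ^ k) i0 j‖₊ : NNReal) ≤ ‖Bc ^ k‖₊ := by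
        rw [Matrix.linfty_opNNNorm_def]
        exact Finset.le_sup (f := fun i => ∑ j, ‖(Bc ^ k) i j‖₊) (mem_univ i0)
      have hentry : ∀ j, (B ^ k) i0 j = ‖(Bc ^ k) i0 j‖ := by
        intro j
        rw [hBcpow k]
        simp only [Matrix.map_apply, Complex.norm_real]
        rw [Real.norm_eq_abs, abs_of_nonneg (hBpow_nn k i0 j)]
      calc ∑ j, (B ^ k) i0 j = ∑ j, ‖(Bc ^ k) i0 j‖ := Finset.sum_congr rfl fun j _ => hentry j
        _ ≤ ‖Bc ^ k‖ := by
            have := hrow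
            rw [← NNReal.coe_le_coe] at this
            push_cast at this
            simpa using this
    calc (α + c) ^ k * ξ i0 ≤ Ξ * ∑ j, (B ^ k) i0 j := by
          rw [← h3]; exact le_trans h1 h2
      _ ≤ Ξ * ‖Bc ^ k‖ := mul_le_mul_of_nonneg_left h4 hΞpos.le
  -- spectral radius bound
  have hBcshift : Bc = algebraMap ℂ (Matrix (Fin r) (Fin r) ℂ) (c : ℂ) + Mc := by
    rw [Algebra.algebraMap_eq_smul_one]
    ext i j
    by_cases hij : i = j <;>
      simp [hBcdef, hBdef, Matrix.one_apply, Matrix.add_apply, Matrix.smul_apply,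
        Matrix.map_apply, hij, hMc] <;> push_cast <;> ring
  have hspecB : ∀ μ ∈ spectrum ℂ Bc, ‖μ‖ ≤ rr := by
    intro μ hμ
    rw [hBcshift, ← spectrum.singleton_add_eq] at hμ
    obtain ⟨a, ha, b, hb, rfl⟩ := Set.mem_add.mp hμ
    rw [Set.mem_singleton_iff] at ha
    subst ha
    have h1 : b.re ≤ -δ := hδ b hb
    have h2 : ‖b‖ ≤ K := hKbound b hb
    have h3 : |b.im| ≤ K := le_trans (Complex.abs_im_le_norm b) h2
    have h4 : -K ≤ b.re := by
      have h4a : |b.re| ≤ ‖b‖ := Complex.abs_re_le_norm b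
      have := abs_le.mp (le_trans h4a h2)
      exact this.1
    have h5 : ‖(c : ℂ) + b‖ ^ 2 = (c + b.re) ^ 2 + b.im ^ 2 := by
      rw [Complex.sq_norm, Complex.normSq_apply]
      simp only [Complex.add_re, Complex.add_im, Complex.ofReal_re, Complex.ofReal_im]
      ring
    have h6 : ‖(c : ℂ) + b‖ ^ 2 ≤ (c - δ) ^ 2 + K ^ 2 := by
      rw [h5]
      have hre1 : c + b.re ≤ c - δ := by linarith
      have hre2 : 0 ≤ c + b.re := by linarith
      have him : b.im ^ 2 ≤ K ^ 2 := by
        have h7 := pow_le_pow_left₀ (abs_nonneg b.im) h3 2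
        rwa [sq_abs] at h7
      nlinarith
    have hrrsq : rr ^ 2 = (c - δ) ^ 2 + K ^ 2 := Real.sq_sqrt (by positivity)
    nlinarith [norm_nonneg ((c : ℂ) + b), hrr0]
  have hsr : spectralRadius ℂ Bc ≤ ENNReal.ofReal rr := by
    rw [spectralRadius]
    refine iSup₂_le fun μ hμ => ?_
    calc (‖μ‖₊ : ENNReal) = ENNReal.ofReal ‖μ‖ := (ofReal_norm μ).symm
      _ ≤ ENNReal.ofReal rr := ENNReal.ofReal_le_ofReal (hspecB μ hμ)
  set r' : ℝ := (rr + c) / 2 with hr'def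
  have hr'1 : rr < r' := by rw [hr'def]; linarith
  have hr'2 : r' < c := by rw [hr'def]; linarith
  have hr'pos : 0 < r' := by rw [hr'def]; linarith
  have htend := spectrum.pow_nnnorm_pow_one_div_tendsto_nhds_spectralRadius Bc
  have hlt : spectralRadius ℂ Bc < ENNReal.ofReal r' :=
    lt_of_le_of_lt hsr ((ENNReal.ofReal_lt_ofReal_iff hr'pos).mpr hr'1)
  have hev1 : ∀ᶠ n : ℕ in atTop, ((‖Bc ^ n‖₊ : ENNReal) ^ (1 / (n : ℝ))) < ENNReal.ofReal r' :=
    htend.eventually_lt_const hlt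
  have hq : 1 < (α + c) / r' := by
    rw [lt_div_iff₀ hr'pos]
    linarith
  have htend2 := tendsto_pow_atTop_atTop_of_one_lt hq
  have hev2 : ∀ᶠ n : ℕ in atTop, Ξ / ξ i0 < ((α + c) / r') ^ n :=
    htend2.eventually_gt_atTop (Ξ / ξ i0)
  have hev3 : ∀ᶠ n : ℕ in atTop, 1 ≤ n := eventually_ge_atTop 1
  obtain ⟨k, ⟨hk1, hk2⟩, hk3⟩ := ((hev1.and hev2).and hev3).exists
  -- from hk1 : ‖Bc^k‖ < r'^k
  have hknz : (k : ℝ) ≠ 0 := by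
    have : 0 < k := hk3
    positivity
  have hBk : ‖Bc ^ k‖ < r' ^ k := by
    have h1 : ((‖Bc ^ k‖₊ : ENNReal) ^ (1 / (k : ℝ))) ^ (k : ℝ) < (ENNReal.ofReal r') ^ (k : ℝ) := by
      apply ENNReal.rpow_lt_rpow hk1
      positivity
    rw [← ENNReal.rpow_mul, one_div_mul_cancel hknz, ENNReal.rpow_one] at h1
    rw [ENNReal.ofReal_rpow_of_pos hr'pos] at h1
    rw [← enorm_eq_nnnorm, ← ofReal_norm] at h1
    have h2 := (ENNReal.ofReal_lt_ofReal_iff (by positivity)).mp h1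
    rwa [Real.rpow_natCast] at h2
  -- final contradiction
  have hub := hnormbound k
  have hgt : Ξ * r' ^ k < (α + c) ^ k * ξ i0 := by
    have h1 : (Ξ / ξ i0) * (r' ^ k * ξ i0) < ((α + c) / r') ^ k * (r' ^ k * ξ i0) := by
      apply mul_lt_mul_of_pos_right hk2
      positivity
    have h2 : (Ξ / ξ i0) * (r' ^ k * ξ i0) = Ξ * r' ^ k := by
      field_simp
    have h3 : ((α + c) / r') ^ k * (r' ^ k * ξ i0) = (α + c) ^ k * ξ i0 := by
      rw [div_pow]
      field_simp
    rw [h2, h3] at h1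
    exact h1
  have : (α + c) ^ k * ξ i0 < (α + c) ^ k * ξ i0 :=
    lt_of_le_of_lt hub (lt_of_le_of_lt (mul_le_mul_of_nonneg_left hBk.le hΞpos.le) (lt_of_le_of_lt (le_refl _) hgt))
  exact lt_irrefl _ this
end AggAux4


set_option maxHeartbeats 2000000 in
/-- Hurwitzness transfer from the aggregate Metzler majorant: given a block-partitioned
real matrix A (blocks A_{ij} ∈ ℝ^{n_i×n_j}), norms N_i on each ℝ^{n_i}, the induced
operator norms opN i j between blocks, and the induced logarithmic norms μ_i on the
diagonal blocks, if the r×r aggregate Metzler majorant M (with M_{ii} = μ_i(A_{ii}) and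
M_{ij} = ‖A_{ij}‖_{ij} for i ≠ j) is Hurwitz, then A is Hurwitz. -/
theorem aggregate_majorant_hurwitz {r : ℕ} (n : Fin r → ℕ)
    (A : Matrix ((i : Fin r) × Fin (n i)) ((i : Fin r) × Fin (n i)) ℝ)
    (N : ∀ i, (Fin (n i) → ℝ) → ℝ)
    (hN_add : ∀ i x y, N i (x + y) ≤ N i x + N i y)
    (hN_smul : ∀ i (c : ℝ) x, N i (c • x) = |c| * N i x)
    (hN_zero : ∀ i x, N i x = 0 ↔ x = 0)
    (Ablk : ∀ i j, Matrix (Fin (n i)) (Fin (n j)) ℝ)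
    (hblk : ∀ i j (a : Fin (n i)) (b : Fin (n j)), Ablk i j a b = A ⟨i, a⟩ ⟨j, b⟩)
    (opN : ∀ i j, Matrix (Fin (n i)) (Fin (n j)) ℝ → ℝ)
    (hopN : ∀ i j B, opN i j B = sSup {c | ∃ v, N j v = 1 ∧ c = N i (B.mulVec v)})
    (mu : ∀ i, Matrix (Fin (n i)) (Fin (n i)) ℝ → ℝ)
    (hmu : ∀ i B, mu i B = ⨅ h : {h : ℝ // 0 < h}, (opN i i (1 + h.1 • B) - 1) / h.1)
    (M : Matrix (Fin r) (Fin r) ℝ)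
    (hM : ∀ i j, M i j = if hij : i = j then mu i (Ablk i i) else opN i j (Ablk i j))
    (hHurwitz : ∀ z ∈ spectrum ℂ (M.map Complex.ofReal), z.re < 0) :
    ∀ z ∈ spectrum ℂ (A.map Complex.ofReal), z.re < 0 := by
  classical
  intro z hz
  by_contra hre'
  have hre : 0 ≤ z.re := not_lt.mp hre'
  -- basic facts about the opN sets
  have hopn_eq : ∀ i j B, opN i j B = sSup (AggAux2.opSet (N i) (N j) B) := hopN
  have hbddA : ∀ i j (B : Matrix (Fin (n i)) (Fin (n j)) ℝ),
      BddAbove (AggAux2.opSet (N i) (N j) B) := fun i j B =>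
    AggAux2.opSet_bddAbove (hN_add i) (hN_smul i) (hN_add j) (hN_smul j) (hN_zero j)
  have hopn_nonneg : ∀ i j B, 0 ≤ opN i j B := by
    intro i j B
    rw [hopn_eq]
    exact AggAux2.op_nonneg (hN_add i) (hN_smul i) (hbddA i j B)
  -- eigenvector
  have hz' : z ∈ spectrum ℂ (Matrix.toLinAlgEquiv' (A.map Complex.ofReal)) := by
    rwa [AlgEquiv.spectrum_eq (Matrix.toLinAlgEquiv' :
      Matrix ((i : Fin r) × Fin (n i)) ((i : Fin r) × Fin (n i)) ℂ ≃ₐ[ℂ] _)]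
  have hev : Module.End.HasEigenvalue (Matrix.toLinAlgEquiv' (A.map Complex.ofReal)) z :=
    Module.End.hasEigenvalue_iff_mem_spectrum.mpr hz'
  obtain ⟨v, hv⟩ := hev.exists_hasEigenvector
  have hveq : (A.map Complex.ofReal).mulVec v = z • v := by
    have h1 := hv.apply_eq_smul
    rwa [Matrix.toLinAlgEquiv'_apply] at h1
  have hvne : v ≠ 0 := hv.right
  -- real and imaginary block parts
  set X : ∀ i, Fin (n i) → ℝ := fun i a => (v ⟨i, a⟩).re with hX
  set Y : ∀ i, Fin (n i) → ℝ := fun i a => (v ⟨i, a⟩).im with hY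
  set ξ : Fin r → ℝ := fun i => AggAux3.Cnorm (N i) (X i) (Y i) with hξ
  have hξ0 : ∀ i, 0 ≤ ξ i := fun i => AggAux3.Cnorm_nonneg (hN_add i) (hN_smul i) _ _
  -- a nonzero block
  obtain ⟨i0, hpos⟩ : ∃ i0, 0 < ξ i0 := by
    have h1 : ∃ p, v p ≠ 0 := by
      by_contra h
      push_neg at h
      exact hvne (funext h)
    obtain ⟨⟨i0, a0⟩, hp⟩ := h1
    refine ⟨i0, ?_⟩
    rcases lt_or_eq_of_le (hξ0 i0) with h | h
    · exact h
    · exfalso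
      have hXz : N i0 (X i0) = 0 := by
        have := AggAux3.N_le_Cnorm (hN_add i0) (hN_smul i0) (X i0) (Y i0)
        have := AggAux.N_nonneg (hN_add i0) (hN_smul i0) (X i0)
        rw [hξ] at h
        simp only at h
        linarith [h.symm]
      have hYz : N i0 (Y i0) = 0 := by
        have := AggAux3.N_le_Cnorm' (hN_add i0) (hN_smul i0) (X i0) (Y i0)
        have := AggAux.N_nonneg (hN_add i0) (hN_smul i0) (Y i0)
        rw [hξ] at h
        simp only at h
        linarith [h.symm]
      have hX0 : X i0 = 0 := (hN_zero i0 _).mp hXz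
      have hY0 : Y i0 = 0 := (hN_zero i0 _).mp hYz
      apply hp
      have hre0 : (v ⟨i0, a0⟩).re = 0 := by
        have := congrFun hX0 a0; simpa [hX] using this
      have him0 : (v ⟨i0, a0⟩).im = 0 := by
        have := congrFun hY0 a0; simpa [hY] using this
      exact Complex.ext hre0 him0
  -- blockwise eigen-equation, real and imaginary parts
  have hblkX : ∀ i, (∑ j, (Ablk i j).mulVec (X j)) = z.re • X i - z.im • Y i := by
    intro i
    funext a
    have h1 : ((A.map Complex.ofReal).mulVec v) ⟨i, a⟩ = z * v ⟨i, a⟩ := by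
      rw [hveq]; rfl
    have h2 : ((A.map Complex.ofReal).mulVec v) ⟨i, a⟩
        = ∑ p : (i : Fin r) × Fin (n i), (A ⟨i, a⟩ p : ℂ) * v p := by
      simp [Matrix.mulVec, dotProduct, Matrix.map_apply]
    have h3 : (∑ p : (i : Fin r) × Fin (n i), (A ⟨i, a⟩ p : ℂ) * v p).re
        = ∑ p : (i : Fin r) × Fin (n i), A ⟨i, a⟩ p * (v p).re := by
      rw [Complex.re_sum]
      exact Finset.sum_congr rfl fun p _ => Complex.re_ofReal_mul _ _
    have h4 : (∑ j, (Ablk i j).mulVec (X j)) a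
        = ∑ p : (i : Fin r) × Fin (n i), A ⟨i, a⟩ p * (v p).re := by
      rw [← Finset.univ_sigma_univ, Finset.sum_sigma]
      rw [Finset.sum_apply]
      refine Finset.sum_congr rfl fun j _ => ?_
      simp only [Matrix.mulVec, dotProduct]
      refine Finset.sum_congr rfl fun b _ => ?_
      rw [hblk i j a b]
    have h5 : (z * v ⟨i, a⟩).re = z.re * X i a - z.im * Y i a := by
      rw [Complex.mul_re]
    have h6 := congrArg Complex.re h1
    rw [h2] at h6
    rw [h3] at h6
    rw [h5] at h6
    rw [h4, h6]
    simp only [Pi.sub_apply, Pi.smul_apply, smul_eq_mul]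
  have hblkY : ∀ i, (∑ j, (Ablk i j).mulVec (Y j)) = z.im • X i + z.re • Y i := by
    intro i
    funext a
    have h1 : ((A.map Complex.ofReal).mulVec v) ⟨i, a⟩ = z * v ⟨i, a⟩ := by
      rw [hveq]; rfl
    have h2 : ((A.map Complex.ofReal).mulVec v) ⟨i, a⟩
        = ∑ p : (i : Fin r) × Fin (n i), (A ⟨i, a⟩ p : ℂ) * v p := by
      simp [Matrix.mulVec, dotProduct, Matrix.map_apply]
    have h3 : (∑ p : (i : Fin r) × Fin (n i), (A ⟨i, a⟩ p : ℂ) * v p).im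
        = ∑ p : (i : Fin r) × Fin (n i), A ⟨i, a⟩ p * (v p).im := by
      rw [Complex.im_sum]
      exact Finset.sum_congr rfl fun p _ => Complex.im_ofReal_mul _ _
    have h4 : (∑ j, (Ablk i j).mulVec (Y j)) a
        = ∑ p : (i : Fin r) × Fin (n i), A ⟨i, a⟩ p * (v p).im := by
      rw [← Finset.univ_sigma_univ, Finset.sum_sigma]
      rw [Finset.sum_apply]
      refine Finset.sum_congr rfl fun j _ => ?_
      simp only [Matrix.mulVec, dotProduct]
      refine Finset.sum_congr rfl fun b _ => ?_
      rw [hblk i j a b]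
    have h5 : (z * v ⟨i, a⟩).im = z.im * X i a + z.re * Y i a := by
      rw [Complex.mul_im]
      simp only [hX, hY]
      ring
    have h6 := congrArg Complex.im h1
    rw [h2] at h6
    rw [h3] at h6
    rw [h5] at h6
    rw [h4, h6]
    simp only [Pi.add_apply, Pi.smul_apply, smul_eq_mul]
  -- the key h-inequality
  have hkey : ∀ (i : Fin r) (h : ℝ), 0 < h →
      (1 + h * z.re) * ξ i ≤ opN i i (1 + h • Ablk i i) * ξ i
        + h * ∑ j ∈ Finset.univ.erase i, opN i j (Ablk i j) * ξ j := by
    intro i h hh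
    set a : ℝ := 1 + h * z.re with hadef
    set b : ℝ := h * z.im with hbdef
    set B0 : Matrix (Fin (n i)) (Fin (n i)) ℝ := 1 + h • Ablk i i with hB0
    have hvX : a • X i - b • Y i
        = B0.mulVec (X i) + ∑ j ∈ Finset.univ.erase i, (h • Ablk i j).mulVec (X j) := by
      have h1 : B0.mulVec (X i) = X i + h • (Ablk i i).mulVec (X i) := by
        rw [hB0, Matrix.add_mulVec, Matrix.one_mulVec, Matrix.smul_mulVec]
      have h2 : (∑ j ∈ Finset.univ.erase i, (h • Ablk i j).mulVec (X j))
          = h • ∑ j ∈ Finset.univ.erase i, (Ablk i j).mulVec (X j) := by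
        rw [Finset.smul_sum]
        exact Finset.sum_congr rfl fun j _ => Matrix.smul_mulVec _ _ _
      rw [h1, h2]
      have h3 : (∑ j ∈ Finset.univ.erase i, (Ablk i j).mulVec (X j))
          = (∑ j, (Ablk i j).mulVec (X j)) - (Ablk i i).mulVec (X i) := by
        rw [← Finset.sum_erase_add univ _ (Finset.mem_univ i)]
        abel
      rw [h3, hblkX i, hadef, hbdef]
      module
    have hvY : b • X i + a • Y i
        = B0.mulVec (Y i) + ∑ j ∈ Finset.univ.erase i, (h • Ablk i j).mulVec (Y j) := by
      have h1 : B0.mulVec (Y i) = Y i + h • (Ablk i i).mulVec (Y i) := by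
        rw [hB0, Matrix.add_mulVec, Matrix.one_mulVec, Matrix.smul_mulVec]
      have h2 : (∑ j ∈ Finset.univ.erase i, (h • Ablk i j).mulVec (Y j))
          = h • ∑ j ∈ Finset.univ.erase i, (Ablk i j).mulVec (Y j) := by
        rw [Finset.smul_sum]
        exact Finset.sum_congr rfl fun j _ => Matrix.smul_mulVec _ _ _
      rw [h1, h2]
      have h3 : (∑ j ∈ Finset.univ.erase i, (Ablk i j).mulVec (Y j))
          = (∑ j, (Ablk i j).mulVec (Y j)) - (Ablk i i).mulVec (Y i) := by
        rw [← Finset.sum_erase_add univ _ (Finset.mem_univ i)]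
        abel
      rw [h3, hblkY i, hadef, hbdef]
      module
    -- lower bound: a * ξ i ≤ Cnorm of the rotated pair
    have hlow : a * ξ i ≤ AggAux3.Cnorm (N i) (a • X i - b • Y i) (b • X i + a • Y i) := by
      rw [AggAux3.Cnorm_rot (hN_add i) (hN_smul i) a b (X i) (Y i)]
      refine mul_le_mul_of_nonneg_right ?_ (hξ0 i)
      calc a ≤ |a| := le_abs_self a
        _ = Real.sqrt (a ^ 2) := (Real.sqrt_sq_eq_abs a).symm
        _ ≤ Real.sqrt (a ^ 2 + b ^ 2) := Real.sqrt_le_sqrt (by nlinarith [sq_nonneg b])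
    -- upper bound
    have hup : AggAux3.Cnorm (N i) (a • X i - b • Y i) (b • X i + a • Y i)
        ≤ opN i i B0 * ξ i + h * ∑ j ∈ Finset.univ.erase i, opN i j (Ablk i j) * ξ j := by
      rw [hvX, hvY]
      refine le_trans (AggAux3.Cnorm_add (hN_add i) (hN_smul i) _ _ _ _) ?_
      have hterm1 : AggAux3.Cnorm (N i) (B0.mulVec (X i)) (B0.mulVec (Y i))
          ≤ opN i i B0 * ξ i := by
        rw [hopn_eq]
        exact AggAux3.Cnorm_mulVec (hN_add i) (hN_smul i) (hN_add i) (hN_smul i) (hN_zero i) B0 _ _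
      have hterm2 : AggAux3.Cnorm (N i) (∑ j ∈ Finset.univ.erase i, (h • Ablk i j).mulVec (X j))
            (∑ j ∈ Finset.univ.erase i, (h • Ablk i j).mulVec (Y j))
          ≤ h * ∑ j ∈ Finset.univ.erase i, opN i j (Ablk i j) * ξ j := by
        refine le_trans (AggAux3.Cnorm_sum (hN_add i) (hN_smul i) _ _ _) ?_
        rw [Finset.mul_sum]
        refine Finset.sum_le_sum fun j _ => ?_
        have h1 : AggAux3.Cnorm (N i) ((h • Ablk i j).mulVec (X j)) ((h • Ablk i j).mulVec (Y j))
            ≤ sSup (AggAux2.opSet (N i) (N j) (h • Ablk i j)) * ξ j :=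
          AggAux3.Cnorm_mulVec (hN_add i) (hN_smul i) (hN_add j) (hN_smul j) (hN_zero j) _ _ _
        rw [AggAux2.op_smul (hN_smul i) hh.le] at h1
        calc AggAux3.Cnorm (N i) ((h • Ablk i j).mulVec (X j)) ((h • Ablk i j).mulVec (Y j))
            ≤ h * sSup (AggAux2.opSet (N i) (N j) (Ablk i j)) * ξ j := h1
          _ = h * (opN i j (Ablk i j) * ξ j) := by rw [hopn_eq]; ring
      linarith
    exact le_trans hlow hup
  -- conclude: z.re * ξ ≤ M ξ
  haveI : Nonempty {h : ℝ // 0 < h} := ⟨⟨1, one_pos⟩⟩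
  have hMξ : ∀ i, z.re * ξ i ≤ ∑ j, M i j * ξ j := by
    intro i
    have hsplit : ∑ j, M i j * ξ j
        = mu i (Ablk i i) * ξ i + ∑ j ∈ Finset.univ.erase i, opN i j (Ablk i j) * ξ j := by
      rw [← Finset.sum_erase_add univ _ (Finset.mem_univ i)]
      rw [hM i i, dif_pos rfl]
      rw [add_comm]
      congr 1
      refine Finset.sum_congr rfl fun j hj => ?_
      rw [hM i j, dif_neg (Ne.symm (Finset.ne_of_mem_erase hj))]
    set S : ℝ := ∑ j ∈ Finset.univ.erase i, opN i j (Ablk i j) * ξ j with hS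
    have hS0 : 0 ≤ S :=
      Finset.sum_nonneg fun j _ => mul_nonneg (hopn_nonneg i j _) (hξ0 j)
    rw [hsplit]
    rcases eq_or_lt_of_le (hξ0 i) with h | h
    · rw [← h]
      simpa using hS0
    · -- use the infimum
      have hmu_ge : (z.re * ξ i - S) / ξ i ≤ mu i (Ablk i i) := by
        rw [hmu]
        refine le_ciInf fun hp => ?_
        obtain ⟨h', hh'⟩ := hp
        have hk := hkey i h' hh'
        rw [← hS] at hk
        rw [div_le_div_iff₀ h hh']
        nlinarith [hk]
      have h2 : z.re * ξ i - S ≤ mu i (Ablk i i) * ξ i := (div_le_iff₀ h).mp hmu_ge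
      linarith
  exact AggAux4.metzler_contradiction M
    (fun i j hij => by rw [hM i j, dif_neg hij]; exact hopn_nonneg i j _)
    hHurwitz ξ hξ0 i0 hpos z.re hre hMξ
end

section
/- Let M ∈ ℝ^{n×n} be an irreducible Metzler matrix with spectral abscissa α(M), and let l, r ∈ ℝⁿ be (entrywise positive) left and right Perron eigenvectors of M. For p = 1 define η ∈ ℝⁿ by η_i = l_i. Then the weighted log norm satisfies μ_{1,[diag(η)]}(M) = α(M), where μ_{1,[diag(η)]}(A) := μ_1(diag(η) A diag(η)^{-1}). -/
/-- The spectral abscissa: the supremum of real parts of the complex spectrum. -/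
noncomputable def specAbscissa {k : ℕ} (A : Matrix (Fin k) (Fin k) ℝ) : ℝ :=
  sSup (Complex.re '' spectrum ℂ (A.map Complex.ofReal))

/-- The logarithmic norm induced by the 1-norm: μ_1(B) = max_j (B_jj + Σ_{i≠j} |B_ij|). -/
noncomputable def mu1 {k : ℕ} [DecidableEq (Fin k)] (B : Matrix (Fin k) (Fin k) ℝ) : ℝ :=
  ⨆ j, (B j j + ∑ i ∈ Finset.univ.erase j, |B i j|)

/-- For an irreducible Metzler matrix M with positive left and right Perron eigenvectors
l and r (for the spectral abscissa α(M)), the weighted log norm with η = l satisfies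
μ_{1,[diag(η)]}(M) = μ_1(diag(η) M diag(η)⁻¹) = α(M). -/
theorem irreducible_metzler_weighted_logNorm {n : ℕ} [NeZero n]
    (M : Matrix (Fin n) (Fin n) ℝ)
    (hMetzler : ∀ i j, i ≠ j → 0 ≤ M i j)
    (hirr : ∀ i j : Fin n, Relation.ReflTransGen (fun a b => a ≠ b ∧ M a b ≠ 0) i j)
    (l r : Fin n → ℝ) (hl : ∀ i, 0 < l i) (hr : ∀ i, 0 < r i)
    (hleft : Matrix.vecMul l M = specAbscissa M • l)
    (hright : M.mulVec r = specAbscissa M • r) :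
    mu1 (Matrix.diagonal l * M * Matrix.diagonal (fun i => (l i)⁻¹)) = specAbscissa M := by
  set α := specAbscissa M with hα
  set B := Matrix.diagonal l * M * Matrix.diagonal (fun i => (l i)⁻¹) with hB
  have hBapp : ∀ i j, B i j = l i * M i j * (l j)⁻¹ := by
    intro i j
    simp [hB, Matrix.mul_diagonal, Matrix.diagonal_mul]
  have hsum : ∀ j, ∑ i, l i * M i j = α * l j := by
    intro j
    have := congrFun hleft j
    simpa [Matrix.vecMul, dotProduct, mul_comm] using this
  have key : ∀ j, B j j + ∑ i ∈ Finset.univ.erase j, |B i j| = α := by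
    intro j
    have hlj : l j ≠ 0 := (hl j).ne'
    have habs : ∀ i ∈ Finset.univ.erase j, |B i j| = l i * M i j * (l j)⁻¹ := by
      intro i hi
      have hij : i ≠ j := Finset.ne_of_mem_erase hi
      have : 0 ≤ l i * M i j * (l j)⁻¹ :=
        mul_nonneg (mul_nonneg (hl i).le (hMetzler i j hij)) (inv_nonneg.mpr (hl j).le)
      rw [hBapp i j, abs_of_nonneg this]
    rw [Finset.sum_congr rfl habs, hBapp j j]
    have hsplit : ∑ i ∈ Finset.univ.erase j, l i * M i j * (l j)⁻¹
        = (∑ i, l i * M i j * (l j)⁻¹) - l j * M j j * (l j)⁻¹ := by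
      rw [eq_sub_iff_add_eq, Finset.sum_erase_add _ _ (Finset.mem_univ j)]
    rw [hsplit, ← Finset.sum_mul, hsum j]
    field_simp
    ring
  have : Nonempty (Fin n) := Fin.pos_iff_nonempty.mp (Nat.pos_of_ne_zero (NeZero.ne n))
  calc mu1 B = ⨆ _ : Fin n, α := by unfold mu1; exact iSup_congr key
    _ = α := ciSup_const
end
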